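/- arXiv:2407.02938 — 4 statements merged into one kernel-verified Lean document; each statement's English description precedes it below -/
import Mathlib

section
/- Let n = p^m for a prime p and m > 2. Then the essential ideal graph E_{Z_n} of Z_n = Z/nZ has exactly m − 1 vertices, and its first Zagreb index equals (m − 1)(m − 2)^2. -/
/-- An ideal `I` of a commutative ring `R` is essential if it is nonzero and has
nonzero intersection with every nonzero ideal of `R`. -/
def IsEssentialIdeal {R : Type*} [CommRing R] (I : Ideal R) : Prop :=
  I ≠ ⊥ ∧ ∀ J : Ideal R, J ≠ ⊥ → I ⊓ J ≠ ⊥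

/-- The essential ideal graph of a commutative ring `R`: vertices are the nonzero
proper ideals of `R`, and distinct vertices `I`, `J` are adjacent iff `I + J` is
an essential ideal of `R`. -/
def essentialIdealGraph (R : Type*) [CommRing R] :
    SimpleGraph {I : Ideal R // I ≠ ⊥ ∧ I ≠ ⊤} where
  Adj I J := I ≠ J ∧ IsEssentialIdeal (I.1 ⊔ J.1)
  symm := by
    constructor
    rintro I J ⟨hne, h⟩
    exact ⟨hne.symm, by rwa [sup_comm]⟩
  loopless := ⟨fun I h => h.1 rfl⟩

/-- The annihilating ideal graph of a commutative ring `R`: vertices are the nonzero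
annihilating ideals of `R`, with distinct vertices `I`, `J` adjacent iff `I * J = 0`. -/
def annihilatingIdealGraph (R : Type*) [CommRing R] :
    SimpleGraph {I : Ideal R // I ≠ ⊥ ∧ ∃ J : Ideal R, J ≠ ⊥ ∧ I * J = ⊥} where
  Adj I J := I ≠ J ∧ I.1 * J.1 = ⊥
  symm := by
    constructor
    rintro I J ⟨hne, h⟩
    exact ⟨hne.symm, by rwa [mul_comm]⟩
  loopless := ⟨fun I h => h.1 rfl⟩

/-- A set `W` of vertices of a graph `G` is a resolving set if any two distinct
vertices are distinguished by their distance to some element of `W`. -/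
def IsResolvingSet {V : Type*} (G : SimpleGraph V) (W : Set V) : Prop :=
  ∀ u v : V, u ≠ v → ∃ w ∈ W, G.dist u w ≠ G.dist v w

/-- The metric dimension of a graph: the least cardinality of a (finite) resolving set. -/
noncomputable def metricDim {V : Type*} (G : SimpleGraph V) : ℕ :=
  sInf {k : ℕ | ∃ W : Set V, W.Finite ∧ IsResolvingSet G W ∧ W.ncard = k}

/-- The degree of a vertex: the number of vertices adjacent to it. -/
noncomputable def gdeg {V : Type*} (G : SimpleGraph V) (v : V) : ℕ :=
  Nat.card {u : V // G.Adj v u}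

/-- The first Zagreb index: the sum of the squares of the vertex degrees. -/
noncomputable def zagreb1 {V : Type*} (G : SimpleGraph V) : ℕ :=
  ∑ᶠ v : V, (gdeg G v) ^ 2

/-- The second Zagreb index: the sum over edges `{u,v}` of `deg u * deg v`. -/
noncomputable def zagreb2 {V : Type*} (G : SimpleGraph V) : ℕ :=
  ∑ᶠ e ∈ G.edgeSet, Sym2.lift ⟨fun u v => gdeg G u * gdeg G v, fun u v => mul_comm _ _⟩ e

-- classification of ideals of ZMod (p^m)
lemma classify (p m : ℕ) (hp : p.Prime) (n : ℕ) (hn : n = p ^ m) [NeZero n]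
    (I : Ideal (ZMod n)) : ∃ k ≤ m, I = Ideal.span {(p : ZMod n) ^ k} := by
  set f := Int.castRingHom (ZMod n) with hf
  have hfs : Function.Surjective f := ZMod.intCast_surjective
  obtain ⟨g, hg⟩ := Submodule.IsPrincipal.principal (I.comap f)
  have hng : (n : ℤ) ∈ I.comap f := by
    simp [Ideal.mem_comap, hf]
  rw [hg, Ideal.submodule_span_eq, Ideal.mem_span_singleton] at hng
  have hdvd : g.natAbs ∣ p ^ m := by
    have h2 : (↑(g.natAbs) : ℤ) ∣ (↑(p ^ m) : ℤ) := by
      rw [Int.natAbs_dvd]; rw [hn] at hng; exact_mod_cast hng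
    exact_mod_cast h2
  obtain ⟨k, hk, hgk⟩ := (Nat.dvd_prime_pow hp).mp hdvd
  refine ⟨k, hk, ?_⟩
  have hmap : I = Ideal.map f (Ideal.span {g}) := by
    conv_lhs => rw [← Ideal.map_comap_of_surjective f hfs I]
    rw [hg, Ideal.submodule_span_eq]
  rw [hmap, Ideal.map_span, Set.image_singleton]
  have : (f g : ZMod n) = (g : ZMod n) := rfl
  rw [this]
  rcases Int.natAbs_eq g with h | h
  · rw [h]; push_cast [hgk]; ring_nf
  · rw [h]; push_cast [hgk]
    rw [Ideal.span_singleton_neg]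

lemma notmem (p m : ℕ) (hp : p.Prime) (n : ℕ) (hn : n = p ^ m) [NeZero n]
    {j k : ℕ} (hjk : j < k) (hkm : k ≤ m) :
    (p : ZMod n) ^ j ∉ Ideal.span {(p : ZMod n) ^ k} := by
  intro hmem
  rw [Ideal.mem_span_singleton] at hmem
  obtain ⟨c, hc⟩ := hmem
  obtain ⟨c', rfl⟩ := ZMod.intCast_surjective c
  have h0 : (((p : ℤ) ^ j - (p : ℤ) ^ k * c' : ℤ) : ZMod n) = 0 := by
    push_cast
    rw [hc]; ring
  rw [ZMod.intCast_zmod_eq_zero_iff_dvd] at h0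
  have h1 : (p : ℤ) ^ (j + 1) ∣ (n : ℤ) := by
    rw [hn]; push_cast; exact pow_dvd_pow _ (by omega)
  have h2 : (p : ℤ) ^ (j + 1) ∣ (p : ℤ) ^ k * c' :=
    Dvd.dvd.mul_right (pow_dvd_pow _ (by omega)) _
  have h3 : (p : ℤ) ^ (j + 1) ∣ (p : ℤ) ^ j := by
    have := dvd_add (h1.trans h0) h2
    simpa using this
  have h4 : p ^ (j + 1) ∣ p ^ j := by exact_mod_cast h3
  have := (Nat.pow_dvd_pow_iff_le_right hp.one_lt).mp h4
  omega

lemma span_le (p : ℕ) (n : ℕ) {j k : ℕ} (hjk : j ≤ k) :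
    Ideal.span {(p : ZMod n) ^ k} ≤ Ideal.span {(p : ZMod n) ^ j} :=
  Ideal.span_singleton_le_span_singleton.mpr (pow_dvd_pow _ hjk)

lemma chain (p m : ℕ) (hp : p.Prime) (n : ℕ) (hn : n = p ^ m) [NeZero n]
    (I J : Ideal (ZMod n)) : I ≤ J ∨ J ≤ I := by
  obtain ⟨j, hj, rfl⟩ := classify p m hp n hn I
  obtain ⟨k, hk, rfl⟩ := classify p m hp n hn J
  rcases le_total j k with h | h
  · exact Or.inr (span_le p n h)
  · exact Or.inl (span_le p n h)

lemma essential_of_ne_bot (p m : ℕ) (hp : p.Prime) (n : ℕ) (hn : n = p ^ m) [NeZero n]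
    (I : Ideal (ZMod n)) (hI : I ≠ ⊥) : IsEssentialIdeal I := by
  refine ⟨hI, fun J hJ => ?_⟩
  rcases chain p m hp n hn I J with h | h
  · rwa [inf_eq_left.mpr h]
  · rwa [inf_eq_right.mpr h]

lemma span_ne (p m : ℕ) (hp : p.Prime) (n : ℕ) (hn : n = p ^ m) [NeZero n]
    {j k : ℕ} (hjk : j < k) (hkm : k ≤ m) :
    Ideal.span {(p : ZMod n) ^ j} ≠ Ideal.span {(p : ZMod n) ^ k} := by
  intro h
  exact notmem p m hp n hn hjk hkm (h ▸ Ideal.mem_span_singleton_self _)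

lemma card_vertices (p m : ℕ) (hp : p.Prime) (hm : 2 < m) (n : ℕ) (hn : n = p ^ m)
    [NeZero n] :
    Nat.card {I : Ideal (ZMod n) // I ≠ ⊥ ∧ I ≠ ⊤} = m - 1 := by
  have hbot : Ideal.span {(p : ZMod n) ^ m} = ⊥ := by
    have h1 : (p : ZMod n) ^ m = ((p ^ m : ℕ) : ZMod n) := by push_cast; ring
    have h2 : (p : ZMod n) ^ m = 0 := by rw [h1, ← hn, ZMod.natCast_self]
    rw [h2, Ideal.span_singleton_eq_bot]
  have htop : Ideal.span {(p : ZMod n) ^ 0} = ⊤ := by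
    rw [pow_zero, Ideal.span_singleton_one]
  set f : Fin (m - 1) → {I : Ideal (ZMod n) // I ≠ ⊥ ∧ I ≠ ⊤} := fun k =>
    ⟨Ideal.span {(p : ZMod n) ^ (k.1 + 1)},
      by
        intro h
        exact span_ne p m hp n hn (show k.1 + 1 < m by omega) le_rfl (h.trans hbot.symm),
      by
        intro h
        exact span_ne p m hp n hn (show 0 < k.1 + 1 by omega) (by omega)
          (htop.trans h.symm)⟩ with hfdef
  have hbij : Function.Bijective f := by
    constructor
    · intro a b hab
      have h2 : Ideal.span {(p : ZMod n) ^ (a.1 + 1)} = Ideal.span {(p : ZMod n) ^ (b.1 + 1)} :=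
        congrArg Subtype.val hab
      by_contra hne
      rcases lt_or_gt_of_ne (fun h => hne (Fin.ext h) : a.1 ≠ b.1) with h | h
      · exact span_ne p m hp n hn (show a.1+1 < b.1+1 by omega) (by omega) h2
      · exact span_ne p m hp n hn (show b.1+1 < a.1+1 by omega) (by omega) h2.symm
    · rintro ⟨I, hb, ht⟩
      obtain ⟨k, hk, rfl⟩ := classify p m hp n hn I
      have hk0 : k ≠ 0 := by rintro rfl; exact ht htop
      have hkm : k ≠ m := by rintro rfl; exact hb hbot
      refine ⟨⟨k - 1, by omega⟩, ?_⟩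
      apply Subtype.ext
      show Ideal.span {(p : ZMod n) ^ (k - 1 + 1)} = Ideal.span {(p : ZMod n) ^ k}
      rw [Nat.sub_add_cancel (by omega)]
  rw [← Nat.card_eq_of_bijective f hbij, Nat.card_eq_fintype_card, Fintype.card_fin]

lemma adj_iff (p m : ℕ) (hp : p.Prime) (n : ℕ) (hn : n = p ^ m) [NeZero n]
    (I J : {I : Ideal (ZMod n) // I ≠ ⊥ ∧ I ≠ ⊤}) :
    (essentialIdealGraph (ZMod n)).Adj I J ↔ I ≠ J := by
  constructor
  · exact fun h => h.1
  · intro h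
    refine ⟨h, essential_of_ne_bot p m hp n hn _ ?_⟩
    intro hsup
    have h2 : I.1 ≤ I.1 ⊔ J.1 := le_sup_left
    rw [hsup] at h2
    exact I.2.1 (le_bot_iff.mp h2)

lemma degree_eq (p m : ℕ) (hp : p.Prime) (hm : 2 < m) (n : ℕ) (hn : n = p ^ m) [NeZero n]
    (v : {I : Ideal (ZMod n) // I ≠ ⊥ ∧ I ≠ ⊤}) :
    gdeg (essentialIdealGraph (ZMod n)) v = m - 2 := by
  classical
  haveI : Finite {I : Ideal (ZMod n) // I ≠ ⊥ ∧ I ≠ ⊤} := inferInstance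
  haveI := Fintype.ofFinite {I : Ideal (ZMod n) // I ≠ ⊥ ∧ I ≠ ⊤}
  unfold gdeg
  have e1 : {u // (essentialIdealGraph (ZMod n)).Adj v u} ≃ {u // ¬ (u = v)} :=
    Equiv.subtypeEquivRight (fun u => by rw [adj_iff p m hp n hn]; exact ne_comm)
  rw [Nat.card_congr e1, Nat.card_eq_fintype_card, Fintype.card_subtype_compl,
    Fintype.card_subtype_eq]
  have := card_vertices p m hp hm n hn
  rw [Nat.card_eq_fintype_card] at this
  omega


/-- For `n = p^m` with `p` prime and `m > 2`, the essential ideal graph of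
`ℤ/nℤ` has exactly `m - 1` vertices and its first Zagreb index equals `(m-1)(m-2)²`. -/
theorem stmt_15 (p : ℕ) (hp : p.Prime) (m : ℕ) (hm : 2 < m)
    (n : ℕ) (hn : n = p ^ m) :
    Nat.card {I : Ideal (ZMod n) // I ≠ ⊥ ∧ I ≠ ⊤} = m - 1 ∧
      zagreb1 (essentialIdealGraph (ZMod n)) = (m - 1) * (m - 2) ^ 2 := by
  haveI : NeZero n := ⟨by rw [hn]; exact pow_ne_zero _ hp.pos.ne'⟩
  refine ⟨card_vertices p m hp hm n hn, ?_⟩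
  classical
  haveI := Fintype.ofFinite {I : Ideal (ZMod n) // I ≠ ⊥ ∧ I ≠ ⊤}
  unfold zagreb1
  rw [finsum_eq_sum_of_fintype]
  have : ∀ v : {I : Ideal (ZMod n) // I ≠ ⊥ ∧ I ≠ ⊤},
      gdeg (essentialIdealGraph (ZMod n)) v ^ 2 = (m - 2) ^ 2 := fun v => by
    rw [degree_eq p m hp hm n hn v]
  rw [Finset.sum_congr rfl (fun v _ => this v), Finset.sum_const, smul_eq_mul,
    Finset.card_univ, ← Nat.card_eq_fintype_card, card_vertices p m hp hm n hn]
end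

section
/- Let n = p^m for a prime p and m > 2. Then the second Zagreb index of the essential ideal graph E_{Z_n} of Z_n = Z/nZ equals C(m−1, 2)·(m − 2)^2, where C(m−1,2) is the binomial coefficient (m−1 choose 2). -/
section Aux

lemma aux_gdeg_top {V : Type*} [Fintype V] [DecidableEq V] (v : V) :
    gdeg (⊤ : SimpleGraph V) v = Fintype.card V - 1 := by
  unfold gdeg
  rw [Nat.card_eq_fintype_card]
  have h : Fintype.card {u : V // ¬ v = u} = Fintype.card V - Fintype.card {u : V // v = u} :=
    Fintype.card_subtype_compl _
  simp only [SimpleGraph.top_adj, Ne]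
  rw [h, Fintype.card_subtype_eq' v]

lemma aux_zagreb2_top (V : Type*) [Fintype V] [DecidableEq V] :
    zagreb2 (⊤ : SimpleGraph V) = (Fintype.card V).choose 2 * (Fintype.card V - 1)^2 := by
  classical
  unfold zagreb2
  rw [← SimpleGraph.coe_edgeFinset, finsum_mem_coe_finset]
  have h : ∀ e ∈ (⊤ : SimpleGraph V).edgeFinset,
      Sym2.lift ⟨fun u v => gdeg (⊤ : SimpleGraph V) u * gdeg (⊤ : SimpleGraph V) v,
        fun u v => mul_comm _ _⟩ e = (Fintype.card V - 1)^2 := by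
    intro e he
    induction e using Sym2.ind with
    | _ u w => simp [aux_gdeg_top, sq]
  rw [Finset.sum_congr rfl h, Finset.sum_const, smul_eq_mul,
    SimpleGraph.card_edgeFinset_top_eq_card_choose_two]

variable {p m : ℕ}

lemma aux_ideal_classify (hp : p.Prime) (I : Ideal (ZMod (p^m))) :
    ∃ k ≤ m, I = Ideal.span {(p : ZMod (p^m))^k} := by
  haveI : NeZero (p^m) := ⟨pow_ne_zero _ hp.pos.ne'⟩
  set f : ℤ →+* ZMod (p^m) := Int.castRingHom _
  have hf : Function.Surjective f := ZMod.intCast_surjective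
  obtain ⟨d, hd⟩ := (IsPrincipalIdealRing.principal (I.comap f)).principal
  have hmap : I = (I.comap f).map f := (Ideal.map_comap_of_surjective f hf I).symm
  have hnmem : ((p:ℤ)^m) ∈ I.comap f := by
    simp only [Ideal.mem_comap]
    have h0 : f ((p:ℤ)^m) = 0 := by
      simp only [f, Int.coe_castRingHom]
      push_cast
      exact_mod_cast ZMod.natCast_self (p^m)
    rw [h0]; exact I.zero_mem
  rw [hd, Ideal.submodule_span_eq, Ideal.mem_span_singleton] at hnmem
  have hdvd : d.natAbs ∣ p^m := by
    have h2 := Int.natAbs_dvd_natAbs.mpr hnmem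
    rwa [Int.natAbs_pow, Int.natAbs_natCast] at h2
  obtain ⟨k, hk, hke⟩ := (Nat.dvd_prime_pow hp).mp hdvd
  refine ⟨k, hk, ?_⟩
  rw [hmap, hd, Ideal.submodule_span_eq, Ideal.map_span]
  have hfd : f d = (d : ZMod (p^m)) := rfl
  rw [Set.image_singleton, hfd]
  have habs : ((d.natAbs : ℕ) : ZMod (p^m)) = (p : ZMod (p^m))^k := by
    rw [hke]; push_cast; ring
  rcases Int.natAbs_eq d with h | h
  · rw [h, Int.cast_natCast, habs]
  · rw [h, Int.cast_neg, Ideal.span_singleton_neg, Int.cast_natCast, habs]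

lemma aux_not_mem_span (hp : p.Prime) {j k : ℕ} (hj : j < m) (hjk : j < k) :
    (p : ZMod (p^m))^j ∉ Ideal.span {(p : ZMod (p^m))^k} := by
  haveI : NeZero (p^m) := ⟨pow_ne_zero _ hp.pos.ne'⟩
  intro hmem
  have hle : Ideal.span {(p : ZMod (p^m))^k} ≤ Ideal.span {(p : ZMod (p^m))^(j+1)} :=
    Ideal.span_singleton_le_span_singleton.mpr (pow_dvd_pow _ hjk)
  have h1 : (p : ZMod (p^m))^j ∈ Ideal.span {(p : ZMod (p^m))^(j+1)} := hle hmem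
  rw [Ideal.mem_span_singleton] at h1
  obtain ⟨c, hc⟩ := h1
  have hcast : ((p^j : ℕ) : ZMod (p^m)) = ((p^(j+1) * c.val : ℕ) : ZMod (p^m)) := by
    push_cast
    rw [ZMod.natCast_val, ZMod.cast_id]
    exact hc
  rw [ZMod.natCast_eq_natCast_iff] at hcast
  have h2 : p^j ≡ p^(j+1) * c.val [MOD p^(j+1)] :=
    hcast.of_dvd (pow_dvd_pow _ hj)
  have h3 : p^(j+1) ∣ p^j :=
    (Nat.modEq_zero_iff_dvd).mp (h2.trans ((Nat.modEq_zero_iff_dvd).mpr (dvd_mul_right _ _)))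
  have := (Nat.pow_dvd_pow_iff_le_right hp.one_lt).mp h3
  omega

lemma aux_chain (hp : p.Prime) (I J : Ideal (ZMod (p^m))) : I ≤ J ∨ J ≤ I := by
  obtain ⟨a, _, ha⟩ := aux_ideal_classify hp I
  obtain ⟨b, _, hb⟩ := aux_ideal_classify hp J
  rcases Nat.le_total a b with h | h
  · right
    rw [ha, hb]
    exact Ideal.span_singleton_le_span_singleton.mpr (pow_dvd_pow _ h)
  · left
    rw [ha, hb]
    exact Ideal.span_singleton_le_span_singleton.mpr (pow_dvd_pow _ h)

lemma aux_graph_top (hp : p.Prime) :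
    essentialIdealGraph (ZMod (p^m)) = ⊤ := by
  ext I J
  simp only [SimpleGraph.top_adj]
  change I ≠ J ∧ IsEssentialIdeal (I.1 ⊔ J.1) ↔ I ≠ J
  constructor
  · exact fun h => h.1
  · intro hne
    refine ⟨hne, ?_, ?_⟩
    · intro hbot
      apply I.2.1
      rw [← le_bot_iff]
      exact le_trans le_sup_left (le_of_eq hbot)
    · intro K hK
      rcases aux_chain hp (I.1 ⊔ J.1) K with h | h
      · rw [inf_eq_left.mpr h]
        intro hbot
        apply I.2.1
        rw [← le_bot_iff]
        exact le_trans le_sup_left (le_of_eq hbot)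
      · rw [inf_eq_right.mpr h]
        exact hK

end Aux

/-- For `n = p^m` with `p` prime and `m > 2`, the second Zagreb index of
the essential ideal graph of `ℤ/nℤ` equals `C(m-1, 2) * (m-2)²`. -/
theorem stmt_16 (p : ℕ) (hp : p.Prime) (m : ℕ) (hm : 2 < m)
    (n : ℕ) (hn : n = p ^ m) :
    zagreb2 (essentialIdealGraph (ZMod n)) = Nat.choose (m - 1) 2 * (m - 2) ^ 2 := by
  subst hn
  haveI : NeZero (p^m) := ⟨pow_ne_zero _ hp.pos.ne'⟩
  haveI : Finite (Ideal (ZMod (p^m))) :=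
    Finite.of_injective (fun I => (I : Set (ZMod (p^m)))) SetLike.coe_injective
  set V := {I : Ideal (ZMod (p^m)) // I ≠ ⊥ ∧ I ≠ ⊤} with hV
  letI : Fintype V := Fintype.ofFinite V
  letI : DecidableEq V := Classical.decEq V
  -- zero and one facts
  have hpm0 : (p : ZMod (p^m))^m = 0 := by
    exact_mod_cast ZMod.natCast_self (p^m)
  -- the bijection with Fin (m-1)
  have hnb : ∀ k : Fin (m-1), Ideal.span {(p : ZMod (p^m))^((k:ℕ)+1)} ≠ ⊥ := by
    intro k hbot
    have hk : (k:ℕ) + 1 < m := by omega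
    have h0 : (p : ZMod (p^m))^((k:ℕ)+1) = 0 := Ideal.span_singleton_eq_bot.mp hbot
    have hmem : (p : ZMod (p^m))^((k:ℕ)+1) ∈ Ideal.span {(p : ZMod (p^m))^m} := by
      rw [h0]; exact Ideal.zero_mem _
    exact aux_not_mem_span hp hk hk hmem
  have hnt : ∀ k : Fin (m-1), Ideal.span {(p : ZMod (p^m))^((k:ℕ)+1)} ≠ ⊤ := by
    intro k htop
    have h1 : (p : ZMod (p^m))^0 ∈ Ideal.span {(p : ZMod (p^m))^((k:ℕ)+1)} := by
      rw [htop]; exact Submodule.mem_top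
    exact aux_not_mem_span hp (by omega) (by omega) h1
  set e : Fin (m-1) → V := fun k => ⟨Ideal.span {(p : ZMod (p^m))^((k:ℕ)+1)}, hnb k, hnt k⟩
    with he
  have hinj : ∀ a b : ℕ, a < m → b < m →
      Ideal.span {(p : ZMod (p^m))^a} = Ideal.span {(p : ZMod (p^m))^b} → a = b := by
    intro a b ha hb hab
    by_contra hne
    rcases Nat.lt_or_ge a b with h | h
    · exact aux_not_mem_span hp ha h (hab ▸ Ideal.subset_span rfl)
    · have h' : b < a := by omega
      exact aux_not_mem_span hp hb h' (hab ▸ Ideal.subset_span rfl)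
  have hbij : Function.Bijective e := by
    constructor
    · intro a b hab
      have := hinj ((a:ℕ)+1) ((b:ℕ)+1) (by omega) (by omega) (congrArg (·.1) hab)
      exact Fin.ext (by omega)
    · rintro ⟨I, hIb, hIt⟩
      obtain ⟨k, hk, hke⟩ := aux_ideal_classify hp I
      have hk0 : k ≠ 0 := by
        intro h0
        apply hIt
        rw [hke, h0, pow_zero, Ideal.span_singleton_one]
      have hkm : k ≠ m := by
        intro h0
        apply hIb
        rw [hke, h0, hpm0, Ideal.span_singleton_eq_bot]
      refine ⟨⟨k-1, by omega⟩, ?_⟩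
      apply Subtype.ext
      show Ideal.span {(p : ZMod (p^m))^((k-1)+1)} = I
      have hkk : k - 1 + 1 = k := Nat.succ_pred_eq_of_pos (Nat.pos_of_ne_zero hk0)
      rw [hkk]
      exact hke.symm
  have hcard : Fintype.card V = m - 1 := by
    rw [← Fintype.card_of_bijective hbij, Fintype.card_fin]
  rw [aux_graph_top hp, aux_zagreb2_top, hcard]
  have h1 : m - 1 - 1 = m - 2 := by omega
  rw [h1]
end

section
/- Let n = p_1 p_2 ⋯ p_k be a product of k ≥ 2 distinct primes and let d be a divisor of n with 1 < d < n having exactly i prime factors (so 1 ≤ i ≤ k − 1). Then the degree of the vertex ⟨d⟩ in the essential ideal graph E_{Z_n} of Z_n = Z/nZ equals 2^{k−i} − 1. -/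
lemma mem_span_nat {n a : ℕ} [NeZero n] (ha : a ∣ n) (x : ZMod n) :
    x ∈ Ideal.span {(a : ZMod n)} ↔ a ∣ x.val := by
  rw [Ideal.mem_span_singleton]
  constructor
  · rintro ⟨y, rfl⟩
    rw [ZMod.val_mul, Nat.dvd_mod_iff ha]
    exact Dvd.dvd.mul_right (by rw [ZMod.val_natCast]; exact (Nat.dvd_mod_iff ha).mpr dvd_rfl) _
  · rintro ⟨c, hc⟩
    exact ⟨(c : ZMod n), by rw [← ZMod.natCast_zmod_val x, hc, Nat.cast_mul]⟩

lemma span_nat_inj {n a b : ℕ} [NeZero n] (ha : a ∣ n) (hb : b ∣ n)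
    (h : Ideal.span {(a : ZMod n)} = Ideal.span {(b : ZMod n)}) : a = b := by
  have h1 : a ∣ b := by
    have : ((b : ZMod n)) ∈ Ideal.span {(a : ZMod n)} := by
      rw [h]; exact Ideal.subset_span rfl
    rw [mem_span_nat ha, ZMod.val_natCast, Nat.dvd_mod_iff ha] at this
    exact this
  have h2 : b ∣ a := by
    have : ((a : ZMod n)) ∈ Ideal.span {(b : ZMod n)} := by
      rw [← h]; exact Ideal.subset_span rfl
    rw [mem_span_nat hb, ZMod.val_natCast, Nat.dvd_mod_iff hb] at this
    exact this
  exact Nat.dvd_antisymm h1 h2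

lemma span_nat_bot {n a : ℕ} [NeZero n] (ha : a ∣ n) :
    Ideal.span {(a : ZMod n)} = ⊥ ↔ a = n := by
  rw [Ideal.span_singleton_eq_bot, ZMod.natCast_eq_zero_iff]
  exact ⟨fun h => Nat.dvd_antisymm ha h, fun h => h ▸ dvd_rfl⟩

lemma span_nat_top {n a : ℕ} [Fact (1 < n)] (ha : a ∣ n) :
    Ideal.span {(a : ZMod n)} = ⊤ ↔ a = 1 := by
  constructor
  · intro h
    have : (1 : ZMod n) ∈ Ideal.span {(a : ZMod n)} := h ▸ Submodule.mem_top
    rw [mem_span_nat ha, ZMod.val_one] at this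
    exact Nat.dvd_one.mp this
  · rintro rfl
    simp [Ideal.span_singleton_one]

lemma exists_span_nat {n : ℕ} [NeZero n] (I : Ideal (ZMod n)) :
    ∃ a, a ∣ n ∧ I = Ideal.span {(a : ZMod n)} := by
  haveI : IsPrincipalIdealRing (ZMod n) :=
    IsPrincipalIdealRing.of_surjective (Int.castRingHom (ZMod n)) ZMod.intCast_surjective
  obtain ⟨x, rfl⟩ : ∃ x, I = Ideal.span {x} :=
    ⟨_, (Submodule.IsPrincipal.span_singleton_generator I).symm⟩
  refine ⟨Nat.gcd x.val n, Nat.gcd_dvd_right _ _, le_antisymm ?_ ?_⟩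
  · rw [Ideal.span_singleton_le_iff_mem, mem_span_nat (Nat.gcd_dvd_right x.val n)]
    exact Nat.gcd_dvd_left x.val n
  · rw [Ideal.span_singleton_le_span_singleton, dvd_iff_exists_eq_mul_left]
    refine ⟨((Nat.gcdA x.val n : ℤ) : ZMod n), ?_⟩
    have hb := Nat.gcd_eq_gcd_ab x.val n
    have : ((Nat.gcd x.val n : ℤ) : ZMod n)
        = (((x.val : ℤ) * Nat.gcdA x.val n + (n : ℤ) * Nat.gcdB x.val n : ℤ) : ZMod n) := by
      rw [← hb]
    push_cast at this
    rw [ZMod.natCast_self, ZMod.natCast_zmod_val] at this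
    rw [this]; ring

lemma sup_span_nat {n a b : ℕ} [NeZero n] (ha : a ∣ n) (hb : b ∣ n) :
    Ideal.span {(a : ZMod n)} ⊔ Ideal.span {(b : ZMod n)}
      = Ideal.span {(Nat.gcd a b : ZMod n)} := by
  refine le_antisymm (sup_le ?_ ?_) ?_
  · exact Ideal.span_singleton_le_span_singleton.mpr (Nat.cast_dvd_cast (Nat.gcd_dvd_left a b))
  · exact Ideal.span_singleton_le_span_singleton.mpr (Nat.cast_dvd_cast (Nat.gcd_dvd_right a b))
  · rw [Ideal.span_le, Set.singleton_subset_iff]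
    have hb' := Nat.gcd_eq_gcd_ab a b
    have : ((Nat.gcd a b : ℤ) : ZMod n)
        = (((a : ℤ) * Nat.gcdA a b + (b : ℤ) * Nat.gcdB a b : ℤ) : ZMod n) := by rw [← hb']
    push_cast at this
    rw [this]
    exact Submodule.add_mem_sup
      (Ideal.mem_span_singleton.mpr (dvd_mul_right _ _))
      (Ideal.mem_span_singleton.mpr (dvd_mul_right _ _))

lemma essential_iff_top {n : ℕ} [NeZero n] (hn1 : 1 < n) (hsq : Squarefree n)
    (I : Ideal (ZMod n)) : IsEssentialIdeal I ↔ I = ⊤ := by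
  haveI : Fact (1 < n) := ⟨hn1⟩
  constructor
  · rintro ⟨hbot, hess⟩
    by_contra hne
    obtain ⟨a, ha, rfl⟩ := exists_span_nat I
    have ha1 : a ≠ 1 := fun h => hne ((span_nat_top ha).mpr h)
    have han : a ≠ n := fun h => hbot ((span_nat_bot ha).mpr h)
    set q := a.minFac with hqdef
    have hq : q.Prime := Nat.minFac_prime ha1
    have hqa : q ∣ a := Nat.minFac_dvd a
    have hqn : q ∣ n := hqa.trans ha
    have hb : n / q ∣ n := Nat.div_dvd_of_dvd hqn
    have hbn : n / q ≠ n := Nat.ne_of_lt (Nat.div_lt_self (by omega) hq.one_lt)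
    refine hess _ (fun h => hbn ((span_nat_bot hb).mp h)) ?_
    rw [eq_bot_iff]
    intro x hx
    obtain ⟨h1, h2⟩ := Submodule.mem_inf.mp hx
    have hxa : a ∣ x.val := (mem_span_nat ha x).mp h1
    have hxb : n / q ∣ x.val := (mem_span_nat hb x).mp h2
    have hcop : Nat.Coprime q (n / q) :=
      Nat.coprime_of_squarefree_mul (by rw [Nat.mul_div_cancel' hqn]; exact hsq)
    have hnx : n ∣ x.val := by
      have := Nat.Coprime.mul_dvd_of_dvd_of_dvd hcop (hqa.trans hxa) hxb
      rwa [Nat.mul_div_cancel' hqn] at this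
    have : x.val = 0 := Nat.eq_zero_of_dvd_of_lt hnx (ZMod.val_lt x)
    exact (Submodule.mem_bot _).mpr ((ZMod.val_eq_zero x).mp this)
  · rintro rfl
    refine ⟨fun h => ?_, fun J hJ => by simpa [top_inf_eq] using hJ⟩
    have : (1 : ZMod n) ∈ (⊥ : Ideal (ZMod n)) := h ▸ Submodule.mem_top
    exact one_ne_zero ((Submodule.mem_bot _).mp this)

lemma squarefree_card_divisors {m : ℕ} (hm : Squarefree m) :
    m.divisors.card = 2 ^ m.primeFactors.card := by
  rw [Nat.card_divisors hm.ne_zero]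
  rw [Finset.prod_congr rfl (fun p hp => by
    rw [Nat.factorization_eq_one_of_squarefree hm (Nat.prime_of_mem_primeFactors hp)
      (Nat.dvd_of_mem_primeFactors hp)])]
  simp [Finset.prod_const]

/-- For `n` a product of `k ≥ 2` distinct primes and `d` a nontrivial
proper divisor of `n` with exactly `i` prime factors, the degree of the vertex `⟨d⟩` in
the essential ideal graph of `ℤ/nℤ` equals `2^{k-i} - 1`. -/
theorem stmt_17 (k : ℕ) (hk : 2 ≤ k) (p : Fin k → ℕ)
    (hp : ∀ j, (p j).Prime) (hinj : Function.Injective p)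
    (n : ℕ) (hn : n = ∏ j, p j)
    (d i : ℕ) (hd : d ∣ n) (h1d : 1 < d) (hdn : d < n)
    (hi : d.primeFactors.card = i)
    (v : {I : Ideal (ZMod n) // I ≠ ⊥ ∧ I ≠ ⊤})
    (hv : v.1 = Ideal.span {(d : ZMod n)}) :
    gdeg (essentialIdealGraph (ZMod n)) v = 2 ^ (k - i) - 1 := by
  classical
  -- basic facts about n
  have hs : ∀ q ∈ Finset.image p Finset.univ, q.Prime := by
    intro q hq
    obtain ⟨j, -, rfl⟩ := Finset.mem_image.mp hq
    exact hp j
  have hnprod : n = ∏ q ∈ Finset.image p Finset.univ, q := by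
    rw [hn, Finset.prod_image (fun a _ b _ h => hinj h)]
  have hsq : Squarefree n := by
    rw [hnprod]
    refine Nat.squarefree_of_factorization_le_one
      (Finset.prod_ne_zero_iff.mpr fun q hq => (hs q hq).ne_zero) (fun r => ?_)
    rw [Nat.factorization_prod (fun q hq => (hs q hq).ne_zero), Finsupp.finset_sum_apply]
    calc ∑ q ∈ Finset.image p Finset.univ, (Nat.factorization q) r
        = ∑ q ∈ Finset.image p Finset.univ, if q = r then 1 else 0 := by
          refine Finset.sum_congr rfl fun q hq => ?_
          rw [(hs q hq).factorization]
          simp [Finsupp.single_apply]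
      _ ≤ 1 := by rw [Finset.sum_ite_eq']; split <;> simp
  have hn1 : 1 < n := lt_trans h1d hdn
  have hn0 : n ≠ 0 := by omega
  haveI : NeZero n := ⟨hn0⟩
  haveI : Fact (1 < n) := ⟨hn1⟩
  have hpf : n.primeFactors = Finset.image p Finset.univ := by
    rw [hnprod]; exact Nat.primeFactors_prod hs
  have hcard : n.primeFactors.card = k := by
    rw [hpf, Finset.card_image_of_injective _ hinj, Finset.card_univ, Fintype.card_fin]
  -- facts about d
  have hd0 : d ≠ 0 := by omega
  have hnd : n / d ∣ n := Nat.div_dvd_of_dvd hd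
  have hdnd : d * (n / d) = n := Nat.mul_div_cancel' hd
  have hnd0 : n / d ≠ 0 := by
    intro h; rw [h, mul_zero] at hdnd; exact hn0 hdnd.symm
  have hndlt : n / d < n := Nat.div_lt_self (by omega) h1d
  have hco : Nat.Coprime d (n / d) := Nat.coprime_of_squarefree_mul (hdnd.symm ▸ hsq)
  have hpfc : (n / d).primeFactors.card = k - i := by
    have hu : d.primeFactors ∪ (n / d).primeFactors = n.primeFactors := by
      rw [← Nat.primeFactors_mul hd0 hnd0, hdnd]
    have hdisj : Disjoint d.primeFactors (n / d).primeFactors := hco.disjoint_primeFactors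
    have := Finset.card_union_of_disjoint hdisj
    rw [hu, hcard, hi] at this
    omega
  have hdivcard : (n / d).divisors.card = 2 ^ (k - i) := by
    rw [squarefree_card_divisors (hsq.squarefree_of_dvd hnd), hpfc]
  -- the target finset
  set T : Finset ℕ := (n / d).divisors.erase 1 with hT
  have hTcard : T.card = 2 ^ (k - i) - 1 := by
    rw [hT, Finset.card_erase_of_mem (Nat.one_mem_divisors.mpr hnd0), hdivcard]
  -- membership facts for e ∈ T
  have hTfacts : ∀ e ∈ T, e ∣ n ∧ e ≠ 1 ∧ e ≠ n ∧ Nat.gcd d e = 1 := by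
    intro e he
    rw [hT, Finset.mem_erase, Nat.mem_divisors] at he
    obtain ⟨he1, hend, -⟩ := he
    have hen : e ∣ n := hend.trans hnd
    have hcop : Nat.Coprime d e := Nat.Coprime.coprime_dvd_right hend hco
    refine ⟨hen, he1, fun h => ?_, hcop⟩
    subst h
    exact absurd (Nat.le_of_dvd (Nat.pos_of_ne_zero hnd0) hend) (by omega)
  -- the bijection
  have hvd : v.1 = Ideal.span {(d : ZMod n)} := hv
  have hbot : ∀ e : {e // e ∈ T}, Ideal.span {((e : ℕ) : ZMod n)} ≠ (⊥ : Ideal (ZMod n)) :=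
    fun e h => (hTfacts e e.2).2.2.1 ((span_nat_bot (hTfacts e e.2).1).mp h)
  have htop : ∀ e : {e // e ∈ T}, Ideal.span {((e : ℕ) : ZMod n)} ≠ (⊤ : Ideal (ZMod n)) :=
    fun e h => (hTfacts e e.2).2.1 ((span_nat_top (hTfacts e e.2).1).mp h)
  have hadj : ∀ e : {e // e ∈ T},
      (essentialIdealGraph (ZMod n)).Adj v ⟨Ideal.span {((e : ℕ) : ZMod n)}, hbot e, htop e⟩ := by
    intro e
    show v ≠ _ ∧ IsEssentialIdeal (v.1 ⊔ _)
    constructor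
    · intro h
      have : v.1 = Ideal.span {((e : ℕ) : ZMod n)} := by rw [h]
      rw [hvd] at this
      have := span_nat_inj hd (hTfacts e e.2).1 this
      have hg := (hTfacts e e.2).2.2.2
      rw [← this] at hg
      simp [Nat.gcd_self] at hg
      omega
    · show IsEssentialIdeal (v.1 ⊔ Ideal.span {((e : ℕ) : ZMod n)})
      rw [essential_iff_top hn1 hsq, hvd, sup_span_nat hd (hTfacts e e.2).1,
        (hTfacts e e.2).2.2.2]
      exact (span_nat_top (one_dvd n)).mpr rfl
  let f : {e // e ∈ T} → {u // (essentialIdealGraph (ZMod n)).Adj v u} :=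
    fun e => ⟨⟨Ideal.span {((e : ℕ) : ZMod n)}, hbot e, htop e⟩, hadj e⟩
  have hbij : Function.Bijective f := by
    constructor
    · intro e1 e2 h
      have h2 : Ideal.span {((e1 : ℕ) : ZMod n)} = Ideal.span {((e2 : ℕ) : ZMod n)} :=
        congrArg (fun u => u.1.1) h
      exact Subtype.ext (span_nat_inj (hTfacts e1 e1.2).1 (hTfacts e2 e2.2).1 h2)
    · rintro ⟨u, hu⟩
      obtain ⟨hune, hess⟩ : v ≠ u ∧ IsEssentialIdeal (v.1 ⊔ u.1) := hu
      obtain ⟨e, he, hue⟩ := exists_span_nat u.1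
      have he1 : e ≠ 1 := fun h => u.2.2 (hue ▸ (span_nat_top he).mpr h)
      have hen : e ≠ n := fun h => u.2.1 (hue ▸ (span_nat_bot he).mpr h)
      have hsup : Nat.gcd d e = 1 := by
        rw [essential_iff_top hn1 hsq, hvd, hue, sup_span_nat hd he,
          span_nat_top ((Nat.gcd_dvd_left d e).trans hd)] at hess
        exact hess
      have hednd : e ∣ n / d := by
        have hmul : e ∣ d * (n / d) := hdnd.symm ▸ he
        exact (Nat.coprime_comm.mp hsup).dvd_of_dvd_mul_left hmul
      have hmem : e ∈ T := by
        rw [hT, Finset.mem_erase, Nat.mem_divisors]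
        exact ⟨he1, hednd, hnd0⟩
      exact ⟨⟨e, hmem⟩, Subtype.ext (Subtype.ext hue.symm)⟩
  calc gdeg (essentialIdealGraph (ZMod n)) v
      = Nat.card {u // (essentialIdealGraph (ZMod n)).Adj v u} := rfl
    _ = Nat.card {e // e ∈ T} := (Nat.card_eq_of_bijective f hbij).symm
    _ = T.card := Nat.card_eq_finsetCard T
    _ = 2 ^ (k - i) - 1 := hTcard
end

section
/- Let n = p_1 p_2 ⋯ p_k be a product of k ≥ 2 distinct primes. Then the first Zagreb index of the essential ideal graph E_{Z_n} of Z_n = Z/nZ equals Σ_{i=1}^{k−1} C(k, i)·(2^{k−i} − 1)^2, where C(k,i) is the binomial coefficient (k choose i). -/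
set_option linter.unusedSectionVars false
set_option maxHeartbeats 1000000


open Finset

section PiField
variable {ι : Type*} [Fintype ι] [DecidableEq ι] {F : ι → Type*} [∀ i, Field (F i)]

/-- The ideal of a product of fields supported on a finset `S`. -/
def IS (S : Finset ι) : Ideal (∀ i, F i) where
  carrier := {x | ∀ i ∉ S, x i = 0}
  zero_mem' := fun i _ => rfl
  add_mem' := fun {a b} ha hb i hi => by simp [Pi.add_apply, ha i hi, hb i hi]
  smul_mem' := fun c x hx i hi => by simp [Pi.smul_apply, hx i hi]

lemma mem_IS {S : Finset ι} {x : ∀ i, F i} : x ∈ (IS S : Ideal (∀ i, F i)) ↔ ∀ i ∉ S, x i = 0 :=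
  Iff.rfl

lemma single_mem_IS {S : Finset ι} {i : ι} :
    Pi.single i (1 : F i) ∈ (IS S : Ideal (∀ i, F i)) ↔ i ∈ S := by
  constructor
  · intro h
    by_contra hi
    have := h i hi
    simp [Pi.single_eq_same] at this
  · intro hi j hj
    exact Pi.single_eq_of_ne (fun h : j = i => hj (h ▸ hi)) 1

lemma single_mem_of_ne_zero {I : Ideal (∀ i, F i)} {x : ∀ i, F i} (hx : x ∈ I) {i : ι}
    (hxi : x i ≠ 0) : Pi.single i (1 : F i) ∈ I := by
  have : Pi.single i ((x i)⁻¹ : F i) * x = Pi.single i (1 : F i) := by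
    ext j
    rcases eq_or_ne j i with rfl | hj
    · simp [Pi.mul_apply, Pi.single_eq_same, inv_mul_cancel₀ hxi]
    · simp [Pi.mul_apply, Pi.single_eq_of_ne hj]
  exact this ▸ I.mul_mem_left _ hx

open scoped Classical in
lemma ideal_eq_IS (I : Ideal (∀ i, F i)) :
    I = IS (Finset.univ.filter (fun i => Pi.single i (1 : F i) ∈ I)) := by
  classical
  apply le_antisymm
  · intro x hx
    rw [mem_IS]
    intro i hi
    by_contra hxi
    exact hi (Finset.mem_filter.2 ⟨Finset.mem_univ i, single_mem_of_ne_zero hx hxi⟩)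
  · intro x hx
    rw [mem_IS] at hx
    have hrep : x = ∑ i, Pi.single i (x i) := (Finset.univ_sum_single x).symm
    rw [hrep]
    refine Ideal.sum_mem I (fun i _ => ?_)
    by_cases hi : i ∈ Finset.univ.filter (fun i => Pi.single i (1 : F i) ∈ I)
    · have h1 : Pi.single i (1 : F i) ∈ I := (Finset.mem_filter.1 hi).2
      have : Pi.single i (x i) * Pi.single i (1 : F i) = Pi.single i (x i) := by
        ext j
        rcases eq_or_ne j i with rfl | hj
        · simp [Pi.mul_apply, Pi.single_eq_same]
        · simp [Pi.mul_apply, Pi.single_eq_of_ne hj]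
      exact this ▸ I.mul_mem_left _ h1
    · rw [hx i hi]
      simp

open scoped Classical in
/-- Ideals of a finite product of fields are classified by finsets of the index. -/
noncomputable def idealFinsetIso : Ideal (∀ i, F i) ≃o Finset ι where
  toFun I := Finset.univ.filter (fun i => Pi.single i (1 : F i) ∈ I)
  invFun S := IS S
  left_inv I := (ideal_eq_IS I).symm
  right_inv S := by
    ext i
    simp [single_mem_IS]
  map_rel_iff' := by
    intro I J
    constructor
    · intro h
      calc I = IS (Finset.univ.filter (fun i => Pi.single i (1 : F i) ∈ I)) := ideal_eq_IS I
        _ ≤ IS (Finset.univ.filter (fun i => Pi.single i (1 : F i) ∈ J)) := by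
            intro x hx
            rw [mem_IS] at hx ⊢
            intro i hi
            exact hx i (fun hmem => hi (h hmem))
        _ = J := (ideal_eq_IS J).symm
    · intro h i hi
      simp only [Equiv.coe_fn_mk, Finset.mem_filter, Finset.mem_univ, true_and] at hi ⊢
      exact h hi

end PiField


section Congr
variable {R : Type*} {S : Type*} [CommRing R] [CommRing S]

lemma essential_congr' (Φ : Ideal R ≃o Ideal S) (I : Ideal R)
    (h : IsEssentialIdeal I) : IsEssentialIdeal (Φ I) := by
  obtain ⟨h1, h2⟩ := h
  constructor
  · intro hb
    apply h1
    have : Φ I = Φ ⊥ := by rw [hb, Φ.map_bot]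
    exact Φ.injective this
  · intro J' hJ'
    have h3 : Φ.symm J' ≠ ⊥ := by
      intro hb
      apply hJ'
      have := congrArg Φ hb
      rwa [Φ.apply_symm_apply, Φ.map_bot] at this
    intro hb
    apply h2 (Φ.symm J') h3
    have : Φ (I ⊓ Φ.symm J') = ⊥ := by
      rw [Φ.map_inf, Φ.apply_symm_apply, hb]
    rw [← Φ.map_bot] at this
    exact Φ.injective this

lemma essential_congr (Φ : Ideal R ≃o Ideal S) (I : Ideal R) :
    IsEssentialIdeal I ↔ IsEssentialIdeal (Φ I) := by
  refine ⟨essential_congr' Φ I, fun h => ?_⟩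
  have := essential_congr' Φ.symm (Φ I) h
  rwa [Φ.symm_apply_apply] at this

lemma zagreb1_congr {V W : Type*} (G : SimpleGraph V) (H : SimpleGraph W) (e : V ≃ W)
    (he : ∀ u v, G.Adj u v ↔ H.Adj (e u) (e v)) : zagreb1 G = zagreb1 H := by
  have hdeg : ∀ v, gdeg G v = gdeg H (e v) := fun v =>
    Nat.card_congr (Equiv.subtypeEquiv e (fun u => he v u))
  unfold zagreb1
  rw [← finsum_comp_equiv e (f := fun w => (gdeg H w) ^ 2)]
  exact finsum_congr fun v => by rw [hdeg]
end Congr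

section PiField
variable {ι : Type*} [Fintype ι] [DecidableEq ι] [Nonempty ι] {F : ι → Type*} [∀ i, Field (F i)]

lemma essential_iff_top_s18 (I : Ideal (∀ i, F i)) : IsEssentialIdeal I ↔ I = ⊤ := by
  classical
  haveI hnt : Nontrivial (∀ i, F i) := by
    refine ⟨1, 0, fun h => ?_⟩
    obtain ⟨i⟩ := ‹Nonempty ι›
    exact one_ne_zero (congrFun h i)
  constructor
  · rintro ⟨h1, h2⟩
    rw [ideal_eq_IS I]
    have hall : ∀ i, Pi.single i (1 : F i) ∈ I := by
      intro i
      by_contra hi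
      have hJ : (IS {i} : Ideal (∀ j, F j)) ≠ ⊥ := by
        intro hb
        have : Pi.single i (1 : F i) ∈ (IS {i} : Ideal (∀ j, F j)) :=
          single_mem_IS.2 (Finset.mem_singleton_self i)
        rw [hb, Ideal.mem_bot] at this
        have h1 : (1 : F i) = 0 := by simpa [Pi.single_eq_same] using congrFun this i
        exact one_ne_zero h1
      apply h2 (IS {i}) hJ
      rw [eq_bot_iff]
      intro x hx
      obtain ⟨hxI, hxJ⟩ := hx
      rw [Ideal.mem_bot]
      ext j
      rcases eq_or_ne j i with rfl | hj
      · by_contra hxj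
        exact hi (single_mem_of_ne_zero hxI hxj)
      · exact (mem_IS.1 hxJ) j (by simp [hj])
    have : Finset.univ.filter (fun i => Pi.single i (1 : F i) ∈ I) = Finset.univ := by
      ext i; simp [hall i]
    rw [this]
    rw [eq_top_iff]
    intro x _
    exact fun i hi => absurd (Finset.mem_univ i) hi
  · rintro rfl
    exact ⟨bot_lt_top.ne', fun J hJ => by simpa using hJ⟩

end PiField

section Comb
open Finset
variable {k : ℕ}

/-- Vertices: nonempty proper subsets of `Fin k`. -/
abbrev V0 (k : ℕ) := {S : Finset (Fin k) // S ≠ ∅ ∧ S ≠ Finset.univ}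

/-- The model graph: adjacency is "union is everything". -/
def G0 (k : ℕ) : SimpleGraph (V0 k) where
  Adj S T := S ≠ T ∧ S.1 ∪ T.1 = Finset.univ
  symm := by constructor; rintro S T ⟨h1, h2⟩; exact ⟨h1.symm, by rwa [Finset.union_comm]⟩
  loopless := ⟨fun S h => h.1 rfl⟩

def adjEquiv (S : V0 k) :
    {T : V0 k // (G0 k).Adj S T} ≃ {U : Finset (Fin k) // U ∈ S.1.powerset.erase S.1} where
  toFun T := ⟨T.1.1 ∩ S.1, by
    rcases T with ⟨⟨T, hT0, hTu⟩, hST, hUn⟩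
    simp only [Finset.mem_erase, Finset.mem_powerset]
    refine ⟨?_, Finset.inter_subset_right⟩
    intro h
    have hsub : S.1 ⊆ T := (Finset.inter_eq_right.1 h)
    apply hTu
    rw [← hUn]
    exact (Finset.union_eq_right.2 hsub).symm ▸ Finset.union_eq_right.2 hsub ▸ rfl⟩
  invFun U := ⟨⟨U.1 ∪ (S.1)ᶜ, by
      have hc : (S.1)ᶜ ≠ ∅ := by
        intro h
        exact S.2.2 (by simpa using congrArg compl h)
      constructor
      · intro h
        exact hc (Finset.union_eq_empty.1 h).2
      · intro h
        obtain ⟨hUS, hUne⟩ : U.1 ⊆ S.1 ∧ U.1 ≠ S.1 := by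
          have := U.2; simp only [Finset.mem_erase, Finset.mem_powerset] at this
          exact ⟨this.2, this.1⟩
        obtain ⟨s, hsS, hsU⟩ := Finset.exists_of_ssubset (hUS.ssubset_of_ne hUne)
        have : s ∈ U.1 ∪ (S.1)ᶜ := by rw [h]; exact Finset.mem_univ s
        rcases Finset.mem_union.1 this with h' | h'
        · exact hsU h'
        · exact (Finset.mem_compl.1 h') hsS⟩, by
      constructor
      · intro h
        have hc : (S.1)ᶜ ≠ ∅ := fun hh => S.2.2 (by simpa using congrArg compl hh)
        obtain ⟨c, hc⟩ := Finset.nonempty_iff_ne_empty.2 hc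
        have hcv : c ∈ U.1 ∪ (S.1)ᶜ := Finset.mem_union_right _ hc
        have : S.1 = U.1 ∪ (S.1)ᶜ := congrArg Subtype.val h
        rw [← this] at hcv
        exact (Finset.mem_compl.1 hc) hcv
      · apply Finset.eq_univ_of_forall
        intro a
        simp only [Finset.mem_union, Finset.mem_compl]
        tauto⟩
  left_inv T := by
    rcases T with ⟨⟨T, hT0, hTu⟩, hST, hUn⟩
    apply Subtype.ext; apply Subtype.ext
    show T ∩ S.1 ∪ (S.1)ᶜ = T
    ext a
    have ha : a ∈ S.1 ∨ a ∈ T := by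
      have := hUn ▸ Finset.mem_univ a
      exact Finset.mem_union.1 (hUn.symm ▸ Finset.mem_univ a)
    simp only [Finset.mem_union, Finset.mem_inter, Finset.mem_compl]
    tauto
  right_inv U := by
    apply Subtype.ext
    have hUS : U.1 ⊆ S.1 := by
      have := U.2; simp only [Finset.mem_erase, Finset.mem_powerset] at this
      exact this.2
    show (U.1 ∪ (S.1)ᶜ) ∩ S.1 = U.1
    ext a
    simp only [Finset.mem_inter, Finset.mem_union, Finset.mem_compl]
    constructor
    · rintro ⟨h1 | h1, h2⟩
      · exact h1
      · exact absurd h2 h1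
    · intro h
      exact ⟨Or.inl h, hUS h⟩

lemma gdeg_G0 (S : V0 k) : gdeg (G0 k) S = 2 ^ S.1.card - 1 := by
  unfold gdeg
  rw [Nat.card_congr (adjEquiv S), Nat.card_eq_fintype_card, Fintype.card_coe,
    Finset.card_erase_of_mem (Finset.mem_powerset_self S.1), Finset.card_powerset]

lemma zagreb1_G0 (hk : 2 ≤ k) :
    zagreb1 (G0 k) = ∑ j ∈ Finset.Ico 1 k, Nat.choose k j * (2 ^ j - 1) ^ 2 := by
  classical
  unfold zagreb1
  rw [finsum_eq_sum_of_fintype]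
  have h1 : ∀ S : V0 k, (gdeg (G0 k) S) ^ 2 = (2 ^ S.1.card - 1) ^ 2 := fun S => by
    rw [gdeg_G0]
  rw [Finset.sum_congr rfl (fun S _ => h1 S)]
  rw [← Finset.sum_subtype (Finset.univ.filter (fun S : Finset (Fin k) => S ≠ ∅ ∧ S ≠ Finset.univ))
    (by intro x; simp) (fun S => (2 ^ S.card - 1) ^ 2)]
  rw [← Finset.sum_fiberwise_of_maps_to (g := Finset.card) (t := Finset.Ico 1 k) ?hmap
    (fun S => (2 ^ S.card - 1) ^ 2)]
  case hmap =>
    intro S hS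
    simp only [Finset.mem_filter, Finset.mem_univ, true_and] at hS
    rw [Finset.mem_Ico]
    constructor
    · exact Finset.card_pos.2 (Finset.nonempty_iff_ne_empty.2 hS.1)
    · rcases lt_or_eq_of_le (Finset.card_le_univ S) with h | h
      · simpa using h
      · exact absurd (Finset.eq_univ_of_card S (by simpa using h)) hS.2
  refine Finset.sum_congr rfl (fun j hj => ?_)
  rw [Finset.mem_Ico] at hj
  have hfib : (Finset.univ.filter (fun S : Finset (Fin k) => S ≠ ∅ ∧ S ≠ Finset.univ)).filter
      (fun S => S.card = j) = Finset.powersetCard j Finset.univ := by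
    ext S
    simp only [Finset.mem_filter, Finset.mem_univ, true_and, Finset.mem_powersetCard,
      Finset.subset_univ]
    constructor
    · rintro ⟨_, h⟩; exact h
    · intro h
      refine ⟨⟨?_, ?_⟩, h⟩
      · rintro rfl; simp at h; omega
      · rintro rfl; rw [Finset.card_univ, Fintype.card_fin] at h; omega
  rw [hfib]
  rw [Finset.sum_congr rfl (fun S hS => by
    rw [(Finset.mem_powersetCard.1 hS).2])]
  rw [Finset.sum_const, Finset.card_powersetCard, Finset.card_univ, Fintype.card_fin,
    smul_eq_mul]

lemma sum_reindex (k : ℕ) :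
    ∑ j ∈ Finset.Ico 1 k, Nat.choose k j * (2 ^ j - 1) ^ 2 =
      ∑ i ∈ Finset.Ico 1 k, Nat.choose k i * (2 ^ (k - i) - 1) ^ 2 := by
  refine Finset.sum_nbij' (fun j => k - j) (fun i => k - i) ?_ ?_ ?_ ?_ ?_
  · intro j hj; simp only [Finset.mem_Ico] at hj ⊢; omega
  · intro i hi; simp only [Finset.mem_Ico] at hi ⊢; omega
  · intro j hj; simp only [Finset.mem_Ico] at hj; omega
  · intro i hi; simp only [Finset.mem_Ico] at hi; omega
  · intro j hj
    rw [Finset.mem_Ico] at hj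
    rw [Nat.choose_symm (by omega), Nat.sub_sub_self (by omega)]

end Comb

/-- For `n` a product of `k ≥ 2` distinct primes, the first Zagreb index of
the essential ideal graph of `ℤ/nℤ` equals `∑_{i=1}^{k-1} C(k,i) (2^{k-i} - 1)²`. -/
theorem stmt_18 (k : ℕ) (hk : 2 ≤ k) (p : Fin k → ℕ)
    (hp : ∀ i, (p i).Prime) (hinj : Function.Injective p)
    (n : ℕ) (hn : n = ∏ i, p i) :
    zagreb1 (essentialIdealGraph (ZMod n)) =
      ∑ i ∈ Finset.Ico 1 k, Nat.choose k i * (2 ^ (k - i) - 1) ^ 2 := by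
  classical
  subst hn
  haveI : ∀ i, Fact (p i).Prime := fun i => ⟨hp i⟩
  haveI : Nonempty (Fin k) := ⟨⟨0, by omega⟩⟩
  have hcop : Pairwise (Function.onFun Nat.Coprime p) := fun i j hij =>
    (Nat.coprime_primes (hp i) (hp j)).2 (fun h => hij (hinj h))
  set e := ZMod.prodEquivPi p hcop with he
  let Ψ : Ideal (ZMod (∏ i, p i)) ≃o Ideal (∀ i, ZMod (p i)) :=
    (Ideal.relIsoOfBijective (e : ZMod (∏ i, p i) →+* ∀ i, ZMod (p i)) e.bijective).symm
  let Φ : Ideal (ZMod (∏ i, p i)) ≃o Finset (Fin k) := Ψ.trans idealFinsetIso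
  have hess : ∀ I : Ideal (ZMod (∏ i, p i)), IsEssentialIdeal I ↔ I = ⊤ := by
    intro I
    rw [essential_congr Ψ I, essential_iff_top_s18]
    exact ⟨fun h => Ψ.injective (by rw [h, Ψ.map_top]), fun h => by rw [h, Ψ.map_top]⟩
  have hbot : ∀ I : Ideal (ZMod (∏ i, p i)), Φ I = ∅ ↔ I = ⊥ := fun I =>
    ⟨fun h => Φ.injective (by rw [h, Φ.map_bot, Finset.bot_eq_empty]),
     fun h => by rw [h, Φ.map_bot, Finset.bot_eq_empty]⟩
  have htop : ∀ I : Ideal (ZMod (∏ i, p i)), Φ I = Finset.univ ↔ I = ⊤ := fun I =>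
    ⟨fun h => Φ.injective (by rw [h, Φ.map_top, Finset.top_eq_univ]),
     fun h => by rw [h, Φ.map_top, Finset.top_eq_univ]⟩
  let vEquiv : {I : Ideal (ZMod (∏ i, p i)) // I ≠ ⊥ ∧ I ≠ ⊤} ≃ V0 k :=
    Equiv.subtypeEquiv Φ.toEquiv (fun I => by
      exact and_congr (not_iff_not.2 (hbot I)).symm (not_iff_not.2 (htop I)).symm)
  have hadj : ∀ I J : {I : Ideal (ZMod (∏ i, p i)) // I ≠ ⊥ ∧ I ≠ ⊤},
      (essentialIdealGraph (ZMod (∏ i, p i))).Adj I J ↔ (G0 k).Adj (vEquiv I) (vEquiv J) := by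
    intro I J
    show (I ≠ J ∧ IsEssentialIdeal (I.1 ⊔ J.1)) ↔
      (vEquiv I ≠ vEquiv J ∧ (vEquiv I).1 ∪ (vEquiv J).1 = Finset.univ)
    have h1 : I ≠ J ↔ vEquiv I ≠ vEquiv J := (Equiv.apply_eq_iff_eq vEquiv).symm.not
    have h2 : (vEquiv I).1 = Φ I.1 := rfl
    have h3 : (vEquiv J).1 = Φ J.1 := rfl
    rw [h1, h2, h3, hess (I.1 ⊔ J.1), ← htop (I.1 ⊔ J.1), Φ.map_sup, Finset.sup_eq_union]
  rw [zagreb1_congr (essentialIdealGraph (ZMod (∏ i, p i))) (G0 k) vEquiv hadj,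
    zagreb1_G0 hk, sum_reindex]
end
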